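/- For v = 1 the Rayleigh-normal distribution function equals the Rayleigh CDF with scale √2: Z_1(μ) = 1 - exp(-μ²/4) for μ > 0 and Z_1(μ) = 0 for μ ≤ 0. -/

import Mathlib

open Real MeasureTheory Set Filter

noncomputable def normalPDF (μ v x : ℝ) : ℝ :=
  (Real.sqrt (2 * Real.pi * v))⁻¹ * Real.exp (-(x - μ)^2 / (2 * v))

-- basic facts
lemma npdf_eq (m x : ℝ) : normalPDF m 1 x
    = (Real.sqrt (2 * Real.pi))⁻¹ * Real.exp (-(1/2) * (x - m)^2) := by
  simp only [normalPDF, mul_one]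
  ring_nf

lemma sqrt2pi_pos : 0 < Real.sqrt (2 * Real.pi) :=
  Real.sqrt_pos.2 (by positivity)

lemma npdf_pos (m x : ℝ) : 0 < normalPDF m 1 x := by
  rw [npdf_eq]; positivity

lemma npdf_cont (m : ℝ) : Continuous (normalPDF m 1) := by
  unfold normalPDF; fun_prop

lemma integrable_npdf (m : ℝ) : Integrable (normalPDF m 1) := by
  have : Integrable (fun x : ℝ => Real.exp (-(1/2) * x^2)) :=
    integrable_exp_neg_mul_sq (by norm_num)
  have h2 := (this.comp_sub_right m).const_mul (Real.sqrt (2 * Real.pi))⁻¹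
  refine h2.congr (Filter.Eventually.of_forall fun x => ?_)
  rw [npdf_eq]

lemma integral_npdf (m : ℝ) : ∫ x, normalPDF m 1 x = 1 := by
  have h : ∫ x : ℝ, Real.exp (-(1/2) * x^2) = Real.sqrt (2 * Real.pi) := by
    rw [integral_gaussian]
    rw [show (π / (1/2) : ℝ) = 2 * π by ring]
  calc ∫ x, normalPDF m 1 x
      = ∫ x, (Real.sqrt (2 * Real.pi))⁻¹ * Real.exp (-(1/2) * ((x:ℝ) - m)^2) := by
        simp_rw [npdf_eq]
    _ = (Real.sqrt (2 * Real.pi))⁻¹ * ∫ x, Real.exp (-(1/2) * ((x:ℝ) - m)^2) := by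
        rw [MeasureTheory.integral_const_mul]
    _ = 1 := by
        rw [show (fun x : ℝ => Real.exp (-(1/2) * (x - m)^2)) = fun x => (fun y : ℝ => Real.exp (-(1/2) * y^2)) (x - m) from rfl]
        rw [integral_sub_right_eq_self (fun y : ℝ => Real.exp (-(1/2) * y^2)) m, h]
        exact inv_mul_cancel₀ sqrt2pi_pos.ne'

-- exponential tilting identity
lemma npdf_tilt (m c x : ℝ) :
    normalPDF m 1 x * Real.exp (c * x)
      = Real.exp (c * m + c^2 / 2) * normalPDF (m + c) 1 x := by
  rw [npdf_eq, npdf_eq]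
  rw [mul_assoc, ← Real.exp_add, mul_left_comm, ← Real.exp_add]
  congr 2
  ring

lemma integrable_npdf_tilt (m c : ℝ) :
    Integrable (fun x => normalPDF m 1 x * Real.exp (c * x)) := by
  simp_rw [npdf_tilt]
  exact (integrable_npdf (m+c)).const_mul _

lemma integral_npdf_tilt (m c : ℝ) :
    ∫ x, normalPDF m 1 x * Real.exp (c * x) = Real.exp (c * m + c^2 / 2) := by
  simp_rw [npdf_tilt]
  rw [MeasureTheory.integral_const_mul, integral_npdf, mul_one]
noncomputable def normalCDF (μ v x : ℝ) : ℝ :=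
  ∫ t in Set.Iio x, normalPDF μ v t

lemma ncdf_eq_Iic (m x : ℝ) : normalCDF m 1 x = ∫ t in Set.Iic x, normalPDF m 1 t := by
  unfold normalCDF
  exact MeasureTheory.setIntegral_congr_set Iio_ae_eq_Iic

lemma ncdf_nonneg (m x : ℝ) : 0 ≤ normalCDF m 1 x := by
  unfold normalCDF
  exact MeasureTheory.setIntegral_nonneg measurableSet_Iio fun t _ => (npdf_pos m t).le

lemma ncdf_le_one (m x : ℝ) : normalCDF m 1 x ≤ 1 := by
  unfold normalCDF
  refine le_trans (MeasureTheory.setIntegral_le_integral (integrable_npdf m)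
    (Filter.Eventually.of_forall fun t => (npdf_pos m t).le)) (le_of_eq (integral_npdf m))

lemma ncdf_mono (m : ℝ) : Monotone (normalCDF m 1) := by
  intro a b hab
  unfold normalCDF
  apply MeasureTheory.setIntegral_mono_set ((integrable_npdf m).integrableOn)
    (Filter.Eventually.of_forall fun t => (npdf_pos m t).le)
  exact HasSubset.Subset.eventuallyLE (Set.Iio_subset_Iio hab)

lemma one_sub_ncdf (m b : ℝ) : 1 - normalCDF m 1 b = ∫ t in Set.Ici b, normalPDF m 1 t := by
  have := MeasureTheory.setIntegral_union (f := normalPDF m 1) (μ := volume)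
    (Set.Iio_disjoint_Ici le_rfl) measurableSet_Ici
    ((integrable_npdf m).integrableOn (s := Set.Iio b))
    ((integrable_npdf m).integrableOn (s := Set.Ici b))
  rw [show Set.Iio b ∪ Set.Ici b = Set.univ from Set.Iio_union_Ici,
    MeasureTheory.setIntegral_univ, integral_npdf] at this
  unfold normalCDF
  linarith

lemma hasDerivAt_ncdf (m x : ℝ) : HasDerivAt (normalCDF m 1) (normalPDF m 1 x) x := by
  have key : ∀ y, normalCDF m 1 y = (∫ t in Set.Iic 0, normalPDF m 1 t) + ∫ t in (0:ℝ)..y, normalPDF m 1 t := by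
    intro y
    rw [ncdf_eq_Iic, ← intervalIntegral.integral_Iic_sub_Iic ((integrable_npdf m).integrableOn)
      ((integrable_npdf m).integrableOn)]
    ring
  have hd : HasDerivAt (fun y => (∫ t in Set.Iic 0, normalPDF m 1 t) + ∫ t in (0:ℝ)..y, normalPDF m 1 t)
      (normalPDF m 1 x) x := by
    refine HasDerivAt.const_add _ ?_
    refine intervalIntegral.integral_hasDerivAt_right
      ((integrable_npdf m).intervalIntegrable) ?_ (npdf_cont m).continuousAt
    exact (npdf_cont m).aestronglyMeasurable.stronglyMeasurableAtFilter
  exact hd.congr_of_eventuallyEq (Filter.Eventually.of_forall key)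

lemma deriv_ncdf (m : ℝ) : deriv (normalCDF m 1) = normalPDF m 1 :=
  funext fun x => (hasDerivAt_ncdf m x).deriv

lemma contDiff_ncdf (m : ℝ) : ContDiff ℝ 1 (normalCDF m 1) := by
  rw [contDiff_one_iff_deriv]
  refine ⟨fun x => (hasDerivAt_ncdf m x).differentiableAt, ?_⟩
  rw [deriv_ncdf]; exact npdf_cont m
lemma mono_deriv_nonneg {A : ℝ → ℝ} (hm : Monotone A) (hd : DifferentiableAt ℝ A x) :
    0 ≤ deriv A x := by
  have h := hd.hasDerivAt
  rw [hasDerivAt_iff_tendsto_slope] at h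
  refine ge_of_tendsto h ?_
  filter_upwards [self_mem_nhdsWithin] with y hy
  have hy' : y ≠ x := hy
  rcases hy'.lt_or_gt with h1 | h1
  · have h2 : A y ≤ A x := hm h1.le
    rw [slope_def_field]
    have hd1 : y - x < 0 := by linarith
    rw [div_nonneg_iff]
    right
    constructor <;> linarith
  · have h2 : A x ≤ A y := hm h1.le
    rw [slope_def_field]
    exact div_nonneg (by linarith) (by linarith)

lemma tail_bound (c b : ℝ) (hc : 0 ≤ c) :
    1 - normalCDF 0 1 b ≤ Real.exp (c^2/2) * Real.exp (-(c*b)) := by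
  rw [one_sub_ncdf]
  have step1 : ∫ t in Set.Ici b, normalPDF 0 1 t
      ≤ ∫ t in Set.Ici b, normalPDF 0 1 t * Real.exp (c * t) * Real.exp (-(c*b)) := by
    refine MeasureTheory.setIntegral_mono_on ((integrable_npdf 0).integrableOn)
      (((integrable_npdf_tilt 0 c).mul_const _).integrableOn) measurableSet_Ici fun t ht => ?_
    rw [mul_assoc, ← Real.exp_add]
    nth_rewrite 1 [show normalPDF 0 1 t = normalPDF 0 1 t * 1 by ring]
    refine mul_le_mul_of_nonneg_left ?_ (npdf_pos 0 t).le
    rw [show (1:ℝ) = Real.exp 0 by simp]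
    apply Real.exp_le_exp.2
    have : b ≤ t := ht
    nlinarith
  have step2 : ∫ t in Set.Ici b, normalPDF 0 1 t * Real.exp (c * t) * Real.exp (-(c*b))
      ≤ ∫ t, normalPDF 0 1 t * Real.exp (c * t) * Real.exp (-(c*b)) := by
    refine MeasureTheory.setIntegral_le_integral ((integrable_npdf_tilt 0 c).mul_const _)
      (Filter.Eventually.of_forall fun t =>
        mul_nonneg (mul_nonneg (npdf_pos 0 t).le (Real.exp_pos _).le) (Real.exp_pos _).le)
  have step3 : ∫ t, normalPDF 0 1 t * Real.exp (c * t) * Real.exp (-(c*b))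
      = Real.exp (c^2/2) * Real.exp (-(c*b)) := by
    rw [MeasureTheory.integral_mul_const, integral_npdf_tilt]
    norm_num
  linarith

lemma tail_tendsto (s : ℝ) (hs : 0 ≤ s) :
    Filter.Tendsto (fun b => (1 - normalCDF 0 1 b) * Real.exp (s*b)) Filter.atTop (nhds 0) := by
  have hb : ∀ b, (1 - normalCDF 0 1 b) * Real.exp (s*b) ≤ Real.exp ((s+1)^2/2) * Real.exp (-b) := by
    intro b
    have h1 := tail_bound (s+1) b (by linarith)
    calc (1 - normalCDF 0 1 b) * Real.exp (s*b)
        ≤ (Real.exp ((s+1)^2/2) * Real.exp (-((s+1)*b))) * Real.exp (s*b) :=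
          mul_le_mul_of_nonneg_right h1 (Real.exp_pos _).le
      _ = Real.exp ((s+1)^2/2) * Real.exp (-b) := by
          rw [mul_assoc, ← Real.exp_add]; ring_nf
  have hnn : ∀ b, 0 ≤ (1 - normalCDF 0 1 b) * Real.exp (s*b) := fun b =>
    mul_nonneg (by linarith [ncdf_le_one 0 b]) (Real.exp_pos _).le
  have hlim : Filter.Tendsto (fun b : ℝ => Real.exp ((s+1)^2/2) * Real.exp (-b))
      Filter.atTop (nhds 0) := by
    rw [show (0:ℝ) = Real.exp ((s+1)^2/2) * 0 by ring]
    exact (Real.tendsto_exp_neg_atTop_nhds_zero).const_mul _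
  exact squeeze_zero hnn hb hlim
lemma tail_le (s b : ℝ) (hs : 0 ≤ s) :
    (1 - normalCDF 0 1 b) * Real.exp (s*b) ≤ Real.exp ((s+1)^2/2) * Real.exp (-b) := by
  have h1 := tail_bound (s+1) b (by linarith)
  calc (1 - normalCDF 0 1 b) * Real.exp (s*b)
      ≤ (Real.exp ((s+1)^2/2) * Real.exp (-((s+1)*b))) * Real.exp (s*b) :=
        mul_le_mul_of_nonneg_right h1 (Real.exp_pos _).le
    _ = Real.exp ((s+1)^2/2) * Real.exp (-b) := by
        rw [mul_assoc, ← Real.exp_add]; ring_nf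

section KeyLemma

variable {A : ℝ → ℝ} {s : ℝ}

lemma interval_bound (hA : ContDiff ℝ 1 A) (hm : Monotone A)
    (hlb : ∀ x, normalCDF 0 1 x ≤ A x) (hub : ∀ x, A x ≤ 1) (hs : 0 ≤ s)
    {b : ℝ} (hb : 0 ≤ b) :
    ∫ x in (-b)..b, deriv A x * Real.exp (s*x)
      ≤ Real.exp (s^2/2) + (1 - normalCDF 0 1 b) * Real.exp (s*b) := by
  have hdA : Continuous (deriv A) := hA.continuous_deriv le_rfl
  have hAdiff : Differentiable ℝ A := hA.differentiable one_ne_zero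
  -- derivative of g x = (A x - Φ x) * exp (s x)
  have hg : ∀ x : ℝ, HasDerivAt (fun y => (A y - normalCDF 0 1 y) * Real.exp (s*y))
      ((deriv A x - normalPDF 0 1 x) * Real.exp (s*x)
        + (A x - normalCDF 0 1 x) * (Real.exp (s*x) * s)) x := by
    intro x
    have h1 : HasDerivAt A (deriv A x) x := (hAdiff x).hasDerivAt
    have h2 := h1.sub (hasDerivAt_ncdf 0 x)
    have h3 : HasDerivAt (fun y : ℝ => Real.exp (s*y)) (Real.exp (s*x) * s) x := by
      simpa using ((hasDerivAt_id x).const_mul s).exp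
    exact h2.mul h3
  have hcont1 : Continuous fun x => (deriv A x - normalPDF 0 1 x) * Real.exp (s*x) := by
    apply Continuous.mul (hdA.sub (npdf_cont 0))
    fun_prop
  have hcont2 : Continuous fun x => (A x - normalCDF 0 1 x) * (Real.exp (s*x) * s) := by
    apply Continuous.mul (hA.continuous.sub (contDiff_ncdf 0).continuous)
    fun_prop
  have ftc := intervalIntegral.integral_eq_sub_of_hasDerivAt (a := -b) (b := b)
    (fun x _ => hg x) ((hcont1.add hcont2).intervalIntegrable _ _)
  rw [intervalIntegral.integral_add (hcont1.intervalIntegrable _ _)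
    (hcont2.intervalIntegrable _ _)] at ftc
  have hI2 : 0 ≤ ∫ x in (-b)..b, (A x - normalCDF 0 1 x) * (Real.exp (s*x) * s) :=
    intervalIntegral.integral_nonneg (by linarith) fun x _ =>
      mul_nonneg (by linarith [hlb x]) (mul_nonneg (Real.exp_pos _).le hs)
  have hgb : (A b - normalCDF 0 1 b) * Real.exp (s*b)
      ≤ (1 - normalCDF 0 1 b) * Real.exp (s*b) :=
    mul_le_mul_of_nonneg_right (by linarith [hub b]) (Real.exp_pos _).le
  have hgnb : 0 ≤ (A (-b) - normalCDF 0 1 (-b)) * Real.exp (s*(-b)) :=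
    mul_nonneg (by linarith [hlb (-b)]) (Real.exp_pos _).le
  have hI1 : ∫ x in (-b)..b, (deriv A x - normalPDF 0 1 x) * Real.exp (s*x)
      ≤ (1 - normalCDF 0 1 b) * Real.exp (s*b) := by linarith
  -- the Gaussian part
  have hφ : ∫ x in (-b)..b, normalPDF 0 1 x * Real.exp (s*x) ≤ Real.exp (s^2/2) := by
    rw [intervalIntegral.integral_of_le (by linarith : -b ≤ b)]
    have := MeasureTheory.setIntegral_le_integral (s := Set.Ioc (-b) b)
      (integrable_npdf_tilt 0 s) (Filter.Eventually.of_forall fun t =>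
        mul_nonneg (npdf_pos 0 t).le (Real.exp_pos _).le)
    rw [integral_npdf_tilt] at this
    calc ∫ x in Set.Ioc (-b) b, normalPDF 0 1 x * Real.exp (s*x)
        ≤ Real.exp (s*0 + s^2/2) := this
      _ = Real.exp (s^2/2) := by norm_num
  have hsplit : ∫ x in (-b)..b, deriv A x * Real.exp (s*x)
      = (∫ x in (-b)..b, (deriv A x - normalPDF 0 1 x) * Real.exp (s*x))
        + ∫ x in (-b)..b, normalPDF 0 1 x * Real.exp (s*x) := by
    rw [← intervalIntegral.integral_add (hcont1.intervalIntegrable _ _)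
      ((show Continuous fun x => normalPDF 0 1 x * Real.exp (s*x) from
        (npdf_cont 0).mul (by fun_prop)).intervalIntegrable _ _)]
    congr 1
    funext x
    ring
  linarith

lemma integrable_deriv_tilt (hA : ContDiff ℝ 1 A) (hm : Monotone A)
    (hlb : ∀ x, normalCDF 0 1 x ≤ A x) (hub : ∀ x, A x ≤ 1) (hs : 0 ≤ s) :
    Integrable (fun x => deriv A x * Real.exp (s*x)) := by
  have hdA : Continuous (deriv A) := hA.continuous_deriv le_rfl
  have hcont : Continuous fun x => deriv A x * Real.exp (s*x) := by
    apply hdA.mul; fun_prop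
  have hnn : ∀ x, 0 ≤ deriv A x * Real.exp (s*x) := fun x =>
    mul_nonneg (mono_deriv_nonneg hm (hA.differentiable one_ne_zero x)) (Real.exp_pos _).le
  refine MeasureTheory.integrable_of_intervalIntegral_norm_bounded
    (a := fun n : ℕ => -(n:ℝ)) (b := fun n : ℕ => (n:ℝ)) (l := Filter.atTop)
    (Real.exp (s^2/2) + Real.exp ((s+1)^2/2)) (fun n => hcont.integrableOn_Ioc) ?_ ?_ ?_
  · exact (tendsto_neg_atBot_iff.2 tendsto_natCast_atTop_atTop)
  · exact tendsto_natCast_atTop_atTop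
  · refine Filter.Eventually.of_forall fun n => ?_
    have : ∀ x, ‖deriv A x * Real.exp (s*x)‖ = deriv A x * Real.exp (s*x) := fun x =>
      Real.norm_of_nonneg (hnn x)
    rw [show (fun x => ‖deriv A x * Real.exp (s*x)‖) = fun x => deriv A x * Real.exp (s*x) from
      funext this]
    have h1 := interval_bound hA hm hlb hub hs (Nat.cast_nonneg n)
    have h2 := tail_le s n hs
    have h3 : Real.exp ((s+1)^2/2) * Real.exp (-(n:ℝ)) ≤ Real.exp ((s+1)^2/2) := by
      nth_rewrite 2 [show Real.exp ((s+1)^2/2) = Real.exp ((s+1)^2/2) * 1 by ring]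
      refine mul_le_mul_of_nonneg_left ?_ (Real.exp_pos _).le
      exact Real.exp_le_one_iff.2 (by simp)
    linarith

lemma integral_deriv_tilt_le (hA : ContDiff ℝ 1 A) (hm : Monotone A)
    (hlb : ∀ x, normalCDF 0 1 x ≤ A x) (hub : ∀ x, A x ≤ 1) (hs : 0 ≤ s) :
    ∫ x, deriv A x * Real.exp (s*x) ≤ Real.exp (s^2/2) := by
  have hint := integrable_deriv_tilt hA hm hlb hub hs
  have ht := MeasureTheory.intervalIntegral_tendsto_integral (μ := volume) hint
    (tendsto_neg_atBot_iff.2 tendsto_natCast_atTop_atTop)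
    (tendsto_natCast_atTop_atTop (R := ℝ)) (l := Filter.atTop (α := ℕ))
  have hlim : Filter.Tendsto
      (fun n : ℕ => Real.exp (s^2/2) + (1 - normalCDF 0 1 (n:ℝ)) * Real.exp (s*(n:ℝ)))
      Filter.atTop (nhds (Real.exp (s^2/2))) := by
    rw [show nhds (Real.exp (s^2/2)) = nhds (Real.exp (s^2/2) + 0) by rw [add_zero]]
    exact Filter.Tendsto.const_add _
      ((tail_tendsto s hs).comp tendsto_natCast_atTop_atTop)
  exact le_of_tendsto_of_tendsto' ht hlim fun n =>
    interval_bound hA hm hlb hub hs (Nat.cast_nonneg n)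

end KeyLemma
/-- The set of fidelities appearing in the definition of the Rayleigh-normal
distribution function: `A` runs over continuously differentiable monotone increasing
functions with `Φ ≤ A ≤ 1`. -/
noncomputable def RNFidelities (μ v : ℝ) : Set ℝ :=
  {r | ∃ A : ℝ → ℝ, ContDiff ℝ 1 A ∧ Monotone A ∧
    (∀ x, normalCDF 0 1 x ≤ A x) ∧ (∀ x, A x ≤ 1) ∧
    r = ∫ x : ℝ, Real.sqrt (deriv A x * normalPDF μ v x)}

/-- The Rayleigh-normal distribution function `Z_v(μ)`. -/
noncomputable def RayleighNormal (v μ : ℝ) : ℝ :=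
  1 - (sSup (RNFidelities μ v))^2
lemma sqrt_npdf_mul (m x : ℝ) :
    Real.sqrt (normalPDF 0 1 x * normalPDF m 1 x)
      = Real.exp (-m^2/8) * normalPDF (m/2) 1 x := by
  have key : normalPDF 0 1 x * normalPDF m 1 x
      = (Real.exp (-m^2/8) * normalPDF (m/2) 1 x)^2 := by
    rw [sq, npdf_eq, npdf_eq, npdf_eq]
    rw [show ((Real.sqrt (2*Real.pi))⁻¹ * Real.exp (-(1/2)*(x-0)^2))
          * ((Real.sqrt (2*Real.pi))⁻¹ * Real.exp (-(1/2)*(x-m)^2))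
        = (Real.sqrt (2*Real.pi))⁻¹ * (Real.sqrt (2*Real.pi))⁻¹
          * (Real.exp (-(1/2)*(x-0)^2) * Real.exp (-(1/2)*(x-m)^2)) by ring]
    rw [show (Real.exp (-m^2/8) * ((Real.sqrt (2*Real.pi))⁻¹ * Real.exp (-(1/2)*(x-m/2)^2)))
          * (Real.exp (-m^2/8) * ((Real.sqrt (2*Real.pi))⁻¹ * Real.exp (-(1/2)*(x-m/2)^2)))
        = (Real.sqrt (2*Real.pi))⁻¹ * (Real.sqrt (2*Real.pi))⁻¹
          * (Real.exp (-m^2/8) * (Real.exp (-m^2/8)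
            * (Real.exp (-(1/2)*(x-m/2)^2) * Real.exp (-(1/2)*(x-m/2)^2)))) by ring]
    rw [← Real.exp_add, ← Real.exp_add, ← Real.exp_add, ← Real.exp_add]
    congr 1
    ring
  rw [key, Real.sqrt_sq (mul_nonneg (Real.exp_pos _).le (npdf_pos _ _).le)]

lemma integral_sqrt_phi (m : ℝ) :
    ∫ x, Real.sqrt (deriv (normalCDF 0 1) x * normalPDF m 1 x) = Real.exp (-m^2/8) := by
  rw [deriv_ncdf 0]
  simp_rw [sqrt_npdf_mul]
  rw [MeasureTheory.integral_const_mul, integral_npdf, mul_one]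

lemma ncdf_shift (m x : ℝ) : normalCDF m 1 x = normalCDF 0 1 (x - m) := by
  unfold normalCDF
  rw [← MeasureTheory.integral_indicator measurableSet_Iio,
      ← MeasureTheory.integral_indicator measurableSet_Iio]
  rw [show (Set.Iio x).indicator (normalPDF m 1)
      = fun t => (Set.Iio (x - m)).indicator (normalPDF 0 1) (t - m) by
    funext t
    by_cases h : t < x
    · have h2 : t - m < x - m := by linarith
      simp only [Set.indicator_apply, Set.mem_Iio, h, h2, if_true]
      rw [npdf_eq, npdf_eq]
      ring_nf
    · have h2 : ¬(t - m < x - m) := fun hh => h (by linarith)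
      simp only [Set.indicator_apply, Set.mem_Iio, h, h2, if_false]]
  exact MeasureTheory.integral_sub_right_eq_self
    (fun t => (Set.Iio (x - m)).indicator (normalPDF 0 1) t) m

lemma mem_fid_pos (m : ℝ) : Real.exp (-m^2/8) ∈ RNFidelities m 1 := by
  refine ⟨normalCDF 0 1, contDiff_ncdf 0, ncdf_mono 0, fun x => le_rfl, fun x => ncdf_le_one 0 x,
    (integral_sqrt_phi m).symm⟩

lemma mem_fid_neg (m : ℝ) (hm : m ≤ 0) : (1:ℝ) ∈ RNFidelities m 1 := by
  refine ⟨normalCDF m 1, contDiff_ncdf m, ncdf_mono m, fun x => ?_, fun x => ncdf_le_one m x, ?_⟩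
  · rw [ncdf_shift m x]
    exact ncdf_mono 0 (by linarith)
  · rw [deriv_ncdf m]
    have : ∀ x, Real.sqrt (normalPDF m 1 x * normalPDF m 1 x) = normalPDF m 1 x := fun x =>
      Real.sqrt_mul_self (npdf_pos m x).le
    simp_rw [this]
    rw [integral_npdf]
lemma sqrt_le_amgm {u v t : ℝ} (hu : 0 ≤ u) (hv : 0 ≤ v) (ht : 0 < t) :
    Real.sqrt (u * v) ≤ (t * u + t⁻¹ * v) / 2 := by
  have h1 : Real.sqrt (u*v) = Real.sqrt (t*u) * Real.sqrt (t⁻¹*v) := by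
    rw [← Real.sqrt_mul (by positivity)]
    congr 1
    field_simp
  have h2 := Real.sq_sqrt (mul_nonneg ht.le hu)
  have h3 := Real.sq_sqrt (mul_nonneg (inv_nonneg.2 ht.le) hv)
  nlinarith [sq_nonneg (Real.sqrt (t*u) - Real.sqrt (t⁻¹*v)), Real.sqrt_nonneg (t*u),
    Real.sqrt_nonneg (t⁻¹*v)]

lemma fid_le_pos {μ : ℝ} (hμ : 0 ≤ μ) {r : ℝ} (hr : r ∈ RNFidelities μ 1) :
    r ≤ Real.exp (-μ^2/8) := by
  obtain ⟨A, hA, hm, hlb, hub, rfl⟩ := hr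
  set s : ℝ := μ/2 with hs_def
  have hs : 0 ≤ s := by rw [hs_def]; linarith
  set t : ℝ := Real.exp (-μ^2/4) with ht_def
  have hI1int := integrable_deriv_tilt hA hm hlb hub hs
  have hI1 := integral_deriv_tilt_le hA hm hlb hub hs
  have hI2int := integrable_npdf_tilt μ (-s)
  have hI2 := integral_npdf_tilt μ (-s)
  have hpt : ∀ x, Real.sqrt (deriv A x * normalPDF μ 1 x)
      ≤ (t * (deriv A x * Real.exp (s*x)) + t⁻¹ * (normalPDF μ 1 x * Real.exp ((-s)*x))) / 2 := by
    intro x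
    have hd := mono_deriv_nonneg hm (hA.differentiable one_ne_zero x)
    have key : deriv A x * normalPDF μ 1 x
        = (deriv A x * Real.exp (s*x)) * (normalPDF μ 1 x * Real.exp ((-s)*x)) := by
      rw [show (deriv A x * Real.exp (s*x)) * (normalPDF μ 1 x * Real.exp ((-s)*x))
          = deriv A x * normalPDF μ 1 x * (Real.exp (s*x) * Real.exp ((-s)*x)) by ring,
        ← Real.exp_add, show s*x + (-s)*x = 0 by ring, Real.exp_zero, mul_one]
    rw [key]
    exact sqrt_le_amgm (mul_nonneg hd (Real.exp_pos _).le)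
      (mul_nonneg (npdf_pos μ x).le (Real.exp_pos _).le) (Real.exp_pos _)
  have hgint : Integrable (fun x =>
      (t * (deriv A x * Real.exp (s*x)) + t⁻¹ * (normalPDF μ 1 x * Real.exp ((-s)*x))) / 2) :=
    ((hI1int.const_mul t).add (hI2int.const_mul t⁻¹)).div_const 2
  have hmono := MeasureTheory.integral_mono_of_nonneg
    (Filter.Eventually.of_forall fun x => Real.sqrt_nonneg _) hgint
    (Filter.Eventually.of_forall hpt)
  have hrhs : ∫ x, (t * (deriv A x * Real.exp (s*x))
        + t⁻¹ * (normalPDF μ 1 x * Real.exp ((-s)*x))) / 2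
      = (t * (∫ x, deriv A x * Real.exp (s*x)) + t⁻¹ * Real.exp ((-s)*μ + (-s)^2/2)) / 2 := by
    rw [MeasureTheory.integral_div, MeasureTheory.integral_add (hI1int.const_mul t)
      (hI2int.const_mul t⁻¹), MeasureTheory.integral_const_mul, MeasureTheory.integral_const_mul,
      hI2]
  rw [hrhs] at hmono
  refine hmono.trans ?_
  have ht1 : t * (∫ x, deriv A x * Real.exp (s*x)) ≤ t * Real.exp (s^2/2) :=
    mul_le_mul_of_nonneg_left hI1 (Real.exp_pos _).le
  have e1 : t * Real.exp (s^2/2) = Real.exp (-μ^2/8) := by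
    rw [ht_def, ← Real.exp_add]
    congr 1
    rw [hs_def]
    ring
  have e2 : t⁻¹ * Real.exp ((-s)*μ + (-s)^2/2) = Real.exp (-μ^2/8) := by
    rw [ht_def, ← Real.exp_neg, ← Real.exp_add]
    congr 1
    rw [hs_def]
    ring
  linarith

lemma fid_le_one {μ : ℝ} {r : ℝ} (hr : r ∈ RNFidelities μ 1) : r ≤ 1 := by
  obtain ⟨A, hA, hm, hlb, hub, rfl⟩ := hr
  have hI1int := integrable_deriv_tilt hA hm hlb hub (le_refl 0)
  have hI1 := integral_deriv_tilt_le hA hm hlb hub (le_refl 0)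
  have hpt : ∀ x, Real.sqrt (deriv A x * normalPDF μ 1 x)
      ≤ ((deriv A x * Real.exp ((0:ℝ)*x)) + normalPDF μ 1 x) / 2 := by
    intro x
    have hd := mono_deriv_nonneg hm (hA.differentiable one_ne_zero x)
    have h := sqrt_le_amgm (u := deriv A x) (v := normalPDF μ 1 x) (t := 1) hd
      (npdf_pos μ x).le one_pos
    rw [zero_mul, Real.exp_zero, mul_one]
    simpa using h
  have hgint : Integrable (fun x =>
      ((deriv A x * Real.exp ((0:ℝ)*x)) + normalPDF μ 1 x) / 2) :=
    (hI1int.add (integrable_npdf μ)).div_const 2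
  have hmono := MeasureTheory.integral_mono_of_nonneg
    (Filter.Eventually.of_forall fun x => Real.sqrt_nonneg _) hgint
    (Filter.Eventually.of_forall hpt)
  have hrhs : ∫ x, ((deriv A x * Real.exp ((0:ℝ)*x)) + normalPDF μ 1 x) / 2
      = ((∫ x, deriv A x * Real.exp ((0:ℝ)*x)) + 1) / 2 := by
    rw [MeasureTheory.integral_div, MeasureTheory.integral_add hI1int (integrable_npdf μ),
      integral_npdf]
  rw [hrhs] at hmono
  refine hmono.trans ?_
  have : Real.exp ((0:ℝ)^2/2) = 1 := by norm_num
  linarith [hI1.trans_eq this]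

theorem stmt11 (μ : ℝ) :
    (0 < μ → RayleighNormal 1 μ = 1 - Real.exp (-μ^2 / 4)) ∧
    (μ ≤ 0 → RayleighNormal 1 μ = 0) := by
  constructor
  · intro hμ
    have hsup : sSup (RNFidelities μ 1) = Real.exp (-μ^2/8) := by
      apply le_antisymm
      · exact csSup_le ⟨_, mem_fid_pos μ⟩ fun r hr => fid_le_pos hμ.le hr
      · exact le_csSup ⟨Real.exp (-μ^2/8), fun r hr => fid_le_pos hμ.le hr⟩ (mem_fid_pos μ)
    rw [RayleighNormal, hsup, sq, ← Real.exp_add]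
    congr 2
    ring
  · intro hμ
    have hsup : sSup (RNFidelities μ 1) = 1 := by
      apply le_antisymm
      · exact csSup_le ⟨_, mem_fid_neg μ hμ⟩ fun r hr => fid_le_one hr
      · exact le_csSup ⟨1, fun r hr => fid_le_one hr⟩ (mem_fid_neg μ hμ)
    rw [RayleighNormal, hsup]
    norm_num
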